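/- Let n ≥ 2, let f : S^{n−1} → ℝ be continuous, and let s ∈ (0,2). Then ∫_{S^{n−1}} (∫_{S(sv)} f(w) dH^{n−1}(w)) dH^{n−1}(v) = S(s)·∫_{S^{n−1}} f(w) dH^{n−1}(w), where S(x) = (S^{n−1} ∩ B(x,1)) ∪ (S^{n−1} ∩ B(−x,1)) and S(s) = H^{n−1}(S(sv)) (independent of the unit vector v). -/

import Mathlib

open MeasureTheory Metric Set Pointwise RealInnerProductSpace

private lemma sqrt_diff_sq_le {t : ℝ} (ht : 0 < t) {A B d : ℝ}
    (hA1 : t ≤ A) (hB1 : t ≤ B) (hd : |A - B| ≤ 2*d) :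
    t * (Real.sqrt A - Real.sqrt B)^2 ≤ d^2 := by
  have hA0 : 0 ≤ A := le_trans ht.le hA1
  have hB0 : 0 ≤ B := le_trans ht.le hB1
  set p := Real.sqrt A with hpdef
  set q := Real.sqrt B with hqdef
  have hp : p^2 = A := Real.sq_sqrt hA0
  have hq : q^2 = B := Real.sq_sqrt hB0
  have hp0 : 0 ≤ p := Real.sqrt_nonneg A
  have hq0 : 0 ≤ q := Real.sqrt_nonneg B
  have hp2t : t ≤ p^2 := by linarith
  have hq2t : t ≤ q^2 := by linarith
  have hd0 : 0 ≤ d := by nlinarith [abs_nonneg (A - B)]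
  have habs : (A - B)^2 ≤ 4*d^2 := by nlinarith [abs_nonneg (A - B), sq_abs (A - B)]
  have hpq : t ≤ p*q := by
    nlinarith [mul_nonneg (sub_nonneg.2 hp2t) (sub_nonneg.2 hq2t),
      mul_nonneg hp0 hq0, sq_nonneg (p*q - t), sq_nonneg (p*q + t)]
  have hsum : 4*t ≤ (p+q)^2 := by nlinarith
  have key : (p-q)^2 * (p+q)^2 = (A-B)^2 := by
    have h : (p-q)^2 * (p+q)^2 = (p^2 - q^2)^2 := by ring
    rw [h, hp, hq]
  have h5 : (p-q)^2 * (4*t) ≤ (p-q)^2 * (p+q)^2 :=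
    mul_le_mul_of_nonneg_left hsum (sq_nonneg _)
  nlinarith [h5, key, habs]

/-- The `m`-dimensional Hausdorff measure of the unit ball in `m`-dimensional
Euclidean space is finite. -/
private lemma hausdorff_closedBall_lt_top (m : ℕ) :
    μH[(m : ℝ)] (closedBall (0 : EuclideanSpace ℝ (Fin m)) 1) < ⊤ := by
  classical
  set e : (Fin m → ℝ) → EuclideanSpace ℝ (Fin m) := ⇑(WithLp.equiv 2 (Fin m → ℝ)).symm with he
  have hLip : LipschitzWith (Real.sqrt m).toNNReal e := by
    apply LipschitzWith.of_dist_le_mul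
    intro x y
    rw [Real.coe_toNNReal _ (Real.sqrt_nonneg _)]
    rw [EuclideanSpace.dist_eq]
    have h1 : ∀ i, dist (e x i) (e y i) ^ 2 ≤ dist x y ^ 2 := by
      intro i
      have := dist_le_pi_dist x y i
      have h0 : dist (e x i) (e y i) = dist (x i) (y i) := rfl
      rw [h0]
      nlinarith [dist_nonneg (x := x i) (y := y i), dist_nonneg (x := x) (y := y)]
    calc Real.sqrt (∑ i, dist (e x i) (e y i) ^ 2)
        ≤ Real.sqrt (∑ _i : Fin m, dist x y ^ 2) := by
          apply Real.sqrt_le_sqrt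
          exact Finset.sum_le_sum fun i _ => h1 i
      _ = Real.sqrt m * dist x y := by
          rw [Finset.sum_const, Finset.card_univ, Fintype.card_fin, nsmul_eq_mul,
            Real.sqrt_mul (by positivity), Real.sqrt_sq dist_nonneg]
  have hsub : closedBall (0 : EuclideanSpace ℝ (Fin m)) 1 ⊆
      e '' (closedBall (0 : Fin m → ℝ) 1) := by
    intro z hz
    refine ⟨WithLp.equiv 2 (Fin m → ℝ) z, ?_, by simp [he]⟩
    rw [mem_closedBall, dist_zero_right]
    rw [mem_closedBall, dist_zero_right] at hz
    have hco : ∀ i, ‖(WithLp.equiv 2 (Fin m → ℝ) z) i‖ ≤ 1 := by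
      intro i
      have h2 : (z i)^2 ≤ ∑ j, (z j)^2 :=
        Finset.single_le_sum (fun j _ => sq_nonneg (z j)) (Finset.mem_univ i)
      have h3 : ‖z‖ = Real.sqrt (∑ j, ‖z j‖^2) := EuclideanSpace.norm_eq z
      have h4 : |z i| ≤ ‖z‖ := by
        rw [h3]
        have h5 : |z i| = Real.sqrt ((z i)^2) := (Real.sqrt_sq_eq_abs _).symm
        rw [h5]
        apply Real.sqrt_le_sqrt
        simpa [Real.norm_eq_abs, sq_abs] using h2
      calc ‖(WithLp.equiv 2 (Fin m → ℝ) z) i‖ = |z i| := rfl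
        _ ≤ ‖z‖ := h4
        _ ≤ 1 := hz
    exact pi_norm_le_iff_of_nonneg (by norm_num) |>.2 hco
  have hpi : (μH[(m : ℝ)] : Measure (Fin m → ℝ)) = volume := by
    simpa using (hausdorffMeasure_pi_real (ι := Fin m))
  calc μH[(m : ℝ)] (closedBall (0 : EuclideanSpace ℝ (Fin m)) 1)
      ≤ μH[(m : ℝ)] (e '' (closedBall (0 : Fin m → ℝ) 1)) := measure_mono hsub
    _ ≤ (Real.sqrt m).toNNReal ^ (m : ℝ) * μH[(m : ℝ)] (closedBall (0 : Fin m → ℝ) 1) :=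
        hLip.hausdorffMeasure_image_le (by positivity) _
    _ < ⊤ := by
        apply ENNReal.mul_lt_top
        · exact ENNReal.rpow_lt_top_of_nonneg (by positivity) ENNReal.coe_ne_top
        · rw [hpi]
          exact (isBounded_closedBall).measure_lt_top


private lemma hausdorff_sphere_lt_top (m : ℕ) :
    μH[((m : ℝ))] (sphere (0 : EuclideanSpace ℝ (Fin (m+1))) 1) < ⊤ := by
  classical
  set nn : ℝ := (m : ℝ) + 1 with hnn
  have hnn0 : 0 < nn := by positivity
  -- the charts
  set g : Fin (m+1) → ℝ → EuclideanSpace ℝ (Fin m) → EuclideanSpace ℝ (Fin (m+1)) :=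
    fun i ε y => (WithLp.equiv 2 (Fin (m+1) → ℝ)).symm
      (i.insertNth (ε * Real.sqrt (1 - ‖y‖^2)) (WithLp.equiv 2 (Fin m → ℝ) y)) with hg
  set K : Set (EuclideanSpace ℝ (Fin m)) := {y | ‖y‖^2 ≤ 1 - 1/nn} with hK
  -- coordinates of g
  have hg_same : ∀ i ε y, g i ε y i = ε * Real.sqrt (1 - ‖y‖^2) := by
    intro i ε y
    simp [hg]
  have hg_above : ∀ i ε y j, g i ε y (i.succAbove j) = y j := by
    intro i ε y j
    simp [hg]
  -- norm squared on K is at most 1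
  have hKnorm : ∀ y ∈ K, ‖y‖ ≤ 1 := by
    intro y hy
    have : ‖y‖^2 ≤ 1 := by
      have := hy
      rw [hK] at this
      simp only [mem_setOf_eq] at this
      have h1 : (0:ℝ) < 1/nn := by positivity
      linarith
    nlinarith [norm_nonneg y]
  -- Lipschitz on K
  have hLip : ∀ (i : Fin (m+1)) (ε : ℝ), ε^2 = 1 →
      LipschitzOnWith (Real.sqrt (nn + 1)).toNNReal (g i ε) K := by
    intro i ε hε
    apply LipschitzOnWith.of_dist_le_mul
    intro y hy z hz
    rw [Real.coe_toNNReal _ (Real.sqrt_nonneg _)]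
    have hy1 : ‖y‖ ≤ 1 := hKnorm y hy
    have hz1 : ‖z‖ ≤ 1 := hKnorm z hz
    rw [hK] at hy hz
    simp only [mem_setOf_eq] at hy hz
    set A := 1 - ‖y‖^2 with hA
    set B := 1 - ‖z‖^2 with hB
    have hA1 : 1/nn ≤ A := by rw [hA]; linarith
    have hB1 : 1/nn ≤ B := by rw [hB]; linarith
    have habd : |A - B| ≤ 2 * dist y z := by
      have h1 : A - B = ‖z‖^2 - ‖y‖^2 := by rw [hA, hB]; ring
      have h2 : |‖z‖ - ‖y‖| ≤ ‖z - y‖ := abs_norm_sub_norm_le z y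
      have h3 : ‖z - y‖ = dist y z := by rw [dist_comm, dist_eq_norm]
      have h4 : |A - B| = |‖z‖ - ‖y‖| * |‖z‖ + ‖y‖| := by
        rw [h1, ← abs_mul]; ring_nf
      have h5 : |‖z‖ + ‖y‖| ≤ 2 := by
        rw [abs_of_nonneg (by positivity)]; linarith
      calc |A - B| = |‖z‖ - ‖y‖| * |‖z‖ + ‖y‖| := h4
        _ ≤ ‖z - y‖ * 2 := by
            apply mul_le_mul h2 h5 (abs_nonneg _) (norm_nonneg _)
        _ = 2 * dist y z := by rw [h3]; ring
    have hsq : (Real.sqrt A - Real.sqrt B)^2 ≤ nn * dist y z ^ 2 := by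
      have := sqrt_diff_sq_le (t := 1/nn) (by positivity) hA1 hB1 habd
      have h7 := mul_le_mul_of_nonneg_left this hnn0.le
      calc (Real.sqrt A - Real.sqrt B)^2 = nn * (1/nn * (Real.sqrt A - Real.sqrt B)^2) := by
            field_simp
        _ ≤ nn * dist y z ^ 2 := h7
    -- distance formula
    have hdist2 : dist (g i ε y) (g i ε z) ^ 2 = 
        (ε * Real.sqrt A - ε * Real.sqrt B)^2 + dist y z ^ 2 := by
      have h7 : dist (g i ε y) (g i ε z) = 
          Real.sqrt (∑ j, dist (g i ε y j) (g i ε z j) ^ 2) := EuclideanSpace.dist_eq _ _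
      have h8 : ∑ j, dist (g i ε y j) (g i ε z j) ^ 2 = 
          (ε * Real.sqrt A - ε * Real.sqrt B)^2 + ∑ j : Fin m, dist (y j) (z j) ^ 2 := by
        rw [Fin.sum_univ_succAbove (fun j => dist (g i ε y j) (g i ε z j) ^ 2) i]
        congr 1
        · rw [hg_same, hg_same, Real.dist_eq, sq_abs, hA, hB]
        · exact Finset.sum_congr rfl fun j _ => by rw [hg_above, hg_above]
      have h9 : dist y z = Real.sqrt (∑ j, dist (y j) (z j) ^ 2) := EuclideanSpace.dist_eq _ _
      have h10 : dist y z ^ 2 = ∑ j, dist (y j) (z j) ^ 2 := by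
        rw [h9, Real.sq_sqrt (Finset.sum_nonneg fun j _ => sq_nonneg _)]
      rw [h7, Real.sq_sqrt (Finset.sum_nonneg fun j _ => sq_nonneg _), h8, h10]
    have hfinal : dist (g i ε y) (g i ε z) ^ 2 ≤ (nn + 1) * dist y z ^ 2 := by
      have h11 : (ε * Real.sqrt A - ε * Real.sqrt B)^2 = ε^2 * (Real.sqrt A - Real.sqrt B)^2 := by
        ring
      rw [hdist2, h11, hε, one_mul]
      linarith
    calc dist (g i ε y) (g i ε z) 
        = Real.sqrt (dist (g i ε y) (g i ε z) ^ 2) := (Real.sqrt_sq dist_nonneg).symm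
      _ ≤ Real.sqrt ((nn+1) * dist y z ^ 2) := Real.sqrt_le_sqrt hfinal
      _ = Real.sqrt (nn+1) * dist y z := by
          rw [Real.sqrt_mul (by positivity), Real.sqrt_sq dist_nonneg]
  -- coverage
  have hcover : sphere (0 : EuclideanSpace ℝ (Fin (m+1))) 1 ⊆ 
      ⋃ i : Fin (m+1), (g i 1 '' K ∪ g i (-1) '' K) := by
    intro x hx
    have hxn : ‖x‖ = 1 := by rwa [mem_sphere_zero_iff_norm] at hx
    have hsum1 : ∑ j, (x j)^2 = 1 := by
      have := EuclideanSpace.norm_eq x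
      rw [hxn] at this
      have h12 : Real.sqrt (∑ j, ‖x j‖^2) = 1 := this.symm
      have h13 : ∑ j, ‖x j‖^2 = 1 := by
        have := congrArg (· ^ 2) h12
        simpa [Real.sq_sqrt (Finset.sum_nonneg fun j _ => sq_nonneg _)] using this
      simpa [Real.norm_eq_abs, sq_abs] using h13
    have hex : ∃ i, 1/nn ≤ (x i)^2 := by
      by_contra hcon
      push_neg at hcon
      have : (∑ j, (x j)^2) < ∑ _j : Fin (m+1), 1/nn := by
        apply Finset.sum_lt_sum_of_nonempty (Finset.univ_nonempty) (fun j _ => hcon j)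
      rw [hsum1, Finset.sum_const, Finset.card_univ, Fintype.card_fin, nsmul_eq_mul] at this
      rw [hnn] at this
      field_simp at this
      push_cast at this; linarith
    obtain ⟨i, hi⟩ := hex
    set y : EuclideanSpace ℝ (Fin m) := (WithLp.equiv 2 (Fin m → ℝ)).symm
      (i.removeNth (WithLp.equiv 2 (Fin (m+1) → ℝ) x)) with hy
    have hyk : ‖y‖^2 = 1 - (x i)^2 := by
      have h14 : ‖y‖ = Real.sqrt (∑ j, ‖y j‖^2) := EuclideanSpace.norm_eq y
      have h15 : ∀ j, y j = x (i.succAbove j) := fun j => rfl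
      have h16 : ∑ j, ‖y j‖^2 = ∑ j : Fin m, (x (i.succAbove j))^2 := by
        exact Finset.sum_congr rfl fun j _ => by rw [h15, Real.norm_eq_abs, sq_abs]
      have h17 : ∑ j : Fin (m+1), (x j)^2 = (x i)^2 + ∑ j : Fin m, (x (i.succAbove j))^2 :=
        Fin.sum_univ_succAbove (fun j => (x j)^2) i
      rw [h14, Real.sq_sqrt (Finset.sum_nonneg fun j _ => sq_nonneg _), h16]
      rw [h17] at hsum1
      linarith
    have hyK : y ∈ K := by
      rw [hK]
      simp only [mem_setOf_eq]
      rw [hyk]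
      linarith
    set ε : ℝ := if 0 ≤ x i then 1 else -1 with hε
    have hgx : g i ε y = x := by
      have h18 : ε * Real.sqrt (1 - ‖y‖^2) = x i := by
        rw [hyk]
        have h19 : 1 - (1 - (x i)^2) = (x i)^2 := by ring
        rw [h19, Real.sqrt_sq_eq_abs]
        rw [hε]
        by_cases h : 0 ≤ x i
        · simp [h, abs_of_nonneg h]
        · push_neg at h
          simp [not_le.2 h, abs_of_neg h]
      have h21 : (WithLp.equiv 2 (Fin m → ℝ)) y =
          i.removeNth (WithLp.equiv 2 (Fin (m+1) → ℝ) x) := rfl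
      have h20 : (i.insertNth (ε * Real.sqrt (1 - ‖y‖^2))
          (WithLp.equiv 2 (Fin m → ℝ) y)) = WithLp.equiv 2 (Fin (m+1) → ℝ) x := by
        rw [h18, h21]
        exact Fin.insertNth_self_removeNth i _
      show (WithLp.equiv 2 (Fin (m+1) → ℝ)).symm _ = x
      rw [h20, Equiv.symm_apply_apply]
    apply mem_iUnion.2
    refine ⟨i, ?_⟩
    by_cases h : 0 ≤ x i
    · left
      refine ⟨y, hyK, ?_⟩
      rw [hε] at hgx
      simpa [h] using hgx
    · right
      refine ⟨y, hyK, ?_⟩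
      rw [hε] at hgx
      simpa [h] using hgx
  -- conclude
  have hsubK : K ⊆ closedBall (0 : EuclideanSpace ℝ (Fin m)) 1 := by
    intro y hy
    rw [mem_closedBall_zero_iff]
    exact hKnorm y hy
  have hone : ∀ (i : Fin (m+1)) (ε : ℝ), ε^2 = 1 → μH[(m:ℝ)] (g i ε '' K) < ⊤ := by
    intro i ε hε
    calc μH[(m:ℝ)] (g i ε '' K)
        ≤ (Real.sqrt (nn + 1)).toNNReal ^ (m:ℝ) * μH[(m:ℝ)] K :=
          (hLip i ε hε).hausdorffMeasure_image_le (by positivity)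
      _ ≤ (Real.sqrt (nn + 1)).toNNReal ^ (m:ℝ) *
            μH[(m:ℝ)] (closedBall (0 : EuclideanSpace ℝ (Fin m)) 1) := by
          exact mul_le_mul_right (measure_mono hsubK) _
      _ < ⊤ := ENNReal.mul_lt_top
          (ENNReal.rpow_lt_top_of_nonneg (by positivity) ENNReal.coe_ne_top)
          (hausdorff_closedBall_lt_top m)
  apply lt_of_le_of_lt (measure_mono hcover)
  apply lt_of_le_of_lt (measure_iUnion_le _)
  rw [tsum_fintype]
  apply ENNReal.sum_lt_top.2
  intro i _
  exact lt_of_le_of_lt (measure_union_le _ _) (ENNReal.add_lt_top.2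
    ⟨hone i 1 (by norm_num), hone i (-1) (by norm_num)⟩)

private lemma hausdorff_sphere_lt_top' (n : ℕ) (hn : 1 ≤ n) :
    μH[(n:ℝ)-1] (sphere (0 : EuclideanSpace ℝ (Fin n)) 1) ≠ ⊤ := by
  obtain ⟨m, rfl⟩ : ∃ m, n = m + 1 := ⟨n - 1, by omega⟩
  have hexp : ((m+1 : ℕ) : ℝ) - 1 = (m : ℝ) := by push_cast; ring
  rw [hexp]
  exact (hausdorff_sphere_lt_top m).ne


private lemma norm_smul_comm {n : ℕ} (v w : EuclideanSpace ℝ (Fin n))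
    (hv : ‖v‖ = 1) (hw : ‖w‖ = 1) (s : ℝ) :
    ‖w - s • v‖ = ‖v - s • w‖ ∧ ‖w + s • v‖ = ‖v + s • w‖ := by
  have key : ∀ (a b : EuclideanSpace ℝ (Fin n)), ‖a‖ = 1 → ‖b‖ = 1 →
      ‖b - s • a‖ ^ 2 = 1 - 2 * (s * ⟪b, a⟫) + s^2 ∧
      ‖b + s • a‖ ^ 2 = 1 + 2 * (s * ⟪b, a⟫) + s^2 := by
    intro a b ha hb
    constructor
    · rw [norm_sub_sq_real, real_inner_smul_right, norm_smul, ha, hb]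
      simp only [Real.norm_eq_abs, mul_one, one_pow, mul_pow, sq_abs]
    · rw [norm_add_sq_real, real_inner_smul_right, norm_smul, ha, hb]
      simp only [Real.norm_eq_abs, mul_one, one_pow, mul_pow, sq_abs]
  obtain ⟨h1, h2⟩ := key v w hv hw
  obtain ⟨h3, h4⟩ := key w v hw hv
  have hcomm : ⟪w, v⟫ = ⟪v, w⟫ := real_inner_comm v w
  constructor
  · have : ‖w - s • v‖ ^ 2 = ‖v - s • w‖ ^ 2 := by rw [h1, h3, hcomm]
    nlinarith [norm_nonneg (w - s • v), norm_nonneg (v - s • w)]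
  · have : ‖w + s • v‖ ^ 2 = ‖v + s • w‖ ^ 2 := by rw [h2, h4, hcomm]
    nlinarith [norm_nonneg (w + s • v), norm_nonneg (v + s • w)]

private lemma measure_cap_eq {n : ℕ} (s : ℝ) (v w : EuclideanSpace ℝ (Fin n))
    (hv : ‖v‖ = 1) (hw : ‖w‖ = 1) :
    μH[(n:ℝ)-1] (sphere (0 : EuclideanSpace ℝ (Fin n)) 1 ∩
        (closedBall (s • v) 1 ∪ closedBall (-(s • v)) 1))
      = μH[(n:ℝ)-1] (sphere (0 : EuclideanSpace ℝ (Fin n)) 1 ∩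
        (closedBall (s • w) 1 ∪ closedBall (-(s • w)) 1)) := by
  set φ := Submodule.reflection (ℝ ∙ (v - w))ᗮ with hφ
  have hφv : φ v = w := Submodule.reflection_sub (hv.trans hw.symm)
  have hsph : ⇑φ '' sphere (0 : EuclideanSpace ℝ (Fin n)) 1 = sphere 0 1 := by
    have h := φ.toIsometryEquiv.image_sphere 0 1
    rw [LinearIsometryEquiv.coe_toIsometryEquiv] at h
    rw [h, map_zero]
  have hball : ∀ x : EuclideanSpace ℝ (Fin n), ⇑φ '' closedBall x 1 = closedBall (φ x) 1 := by
    intro x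
    have h := φ.toIsometryEquiv.image_closedBall x 1
    rwa [LinearIsometryEquiv.coe_toIsometryEquiv] at h
  have himg : ⇑φ '' (sphere (0 : EuclideanSpace ℝ (Fin n)) 1 ∩
      (closedBall (s • v) 1 ∪ closedBall (-(s • v)) 1)) =
      sphere (0 : EuclideanSpace ℝ (Fin n)) 1 ∩
      (closedBall (s • w) 1 ∪ closedBall (-(s • w)) 1) := by
    rw [image_inter φ.injective, image_union, hsph, hball, hball]
    rw [φ.map_smul, hφv, _root_.map_neg φ, φ.map_smul, hφv]
  rw [← himg, φ.isometry.hausdorffMeasure_image (Or.inr φ.surjective)]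




/-- Let `n ≥ 2`, `f : S^{n−1} → ℝ` continuous and `s ∈ (0,2)`.
Then `∫_{S^{n−1}} (∫_{S(sv)} f dH^{n−1}) dH^{n−1}(v) = S(s)·∫_{S^{n−1}} f dH^{n−1}`,
where `S(x) = (S^{n−1} ∩ B(x,1)) ∪ (S^{n−1} ∩ B(−x,1))` and
`S(s) = H^{n−1}(S(s·v₀))` for any unit vector `v₀` (it is independent of `v₀`). -/
theorem stmt9 (n : ℕ) (hn : 2 ≤ n)
    (f : EuclideanSpace ℝ (Fin n) → ℝ)
    (hf : ContinuousOn f (sphere (0 : EuclideanSpace ℝ (Fin n)) 1))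
    (s : ℝ) (hs : s ∈ Set.Ioo (0 : ℝ) 2)
    (v₀ : EuclideanSpace ℝ (Fin n)) (hv₀ : ‖v₀‖ = 1) :
    (∫ v in sphere (0 : EuclideanSpace ℝ (Fin n)) 1,
        (∫ w in ((sphere (0 : EuclideanSpace ℝ (Fin n)) 1 ∩ closedBall (s • v) 1) ∪
            (sphere (0 : EuclideanSpace ℝ (Fin n)) 1 ∩ closedBall (-(s • v)) 1)),
          f w ∂(μH[(n : ℝ) - 1])) ∂(μH[(n : ℝ) - 1]))
      = (μH[(n : ℝ) - 1] ((sphere (0 : EuclideanSpace ℝ (Fin n)) 1 ∩ closedBall (s • v₀) 1) ∪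
            (sphere (0 : EuclideanSpace ℝ (Fin n)) 1 ∩ closedBall (-(s • v₀)) 1))).toReal *
        ∫ w in sphere (0 : EuclideanSpace ℝ (Fin n)) 1, f w ∂(μH[(n : ℝ) - 1]) := by
  set μ : Measure (EuclideanSpace ℝ (Fin n)) := μH[(n:ℝ)-1] with hμ
  set S : Set (EuclideanSpace ℝ (Fin n)) := sphere 0 1 with hSdef
  have hSmeas : MeasurableSet S := isClosed_sphere.measurableSet
  have hfin : μ S ≠ ⊤ := hausdorff_sphere_lt_top' n (by omega)
  haveI : IsFiniteMeasure (μ.restrict S) :=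
    ⟨by rw [Measure.restrict_apply_univ]; exact lt_of_le_of_ne le_top hfin⟩
  have hv₀S : v₀ ∈ S := by rwa [hSdef, mem_sphere_zero_iff_norm]
  obtain ⟨M, hM⟩ :=
    (isCompact_sphere (0 : EuclideanSpace ℝ (Fin n)) 1).exists_bound_of_continuousOn hf
  have hM0 : 0 ≤ M := le_trans (norm_nonneg _) (hM v₀ hv₀S)
  set U : EuclideanSpace ℝ (Fin n) → Set (EuclideanSpace ℝ (Fin n)) :=
    fun v => closedBall (s • v) 1 ∪ closedBall (-(s • v)) 1 with hU
  have hUmeas : ∀ v, MeasurableSet (U v) := fun v =>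
    measurableSet_closedBall.union measurableSet_closedBall
  set T : Set (EuclideanSpace ℝ (Fin n) × EuclideanSpace ℝ (Fin n)) :=
    {p | dist p.2 (s • p.1) ≤ 1 ∨ dist p.2 (-(s • p.1)) ≤ 1} with hT
  have hTclosed : IsClosed T := by
    have h1 : IsClosed {p : EuclideanSpace ℝ (Fin n) × EuclideanSpace ℝ (Fin n) |
        dist p.2 (s • p.1) ≤ 1} :=
      isClosed_le (Continuous.dist continuous_snd (continuous_fst.const_smul s))
        continuous_const
    have h2 : IsClosed {p : EuclideanSpace ℝ (Fin n) × EuclideanSpace ℝ (Fin n) |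
        dist p.2 (-(s • p.1)) ≤ 1} :=
      isClosed_le (Continuous.dist continuous_snd ((continuous_fst.const_smul s).neg))
        continuous_const
    exact h1.union h2
  set G : EuclideanSpace ℝ (Fin n) × EuclideanSpace ℝ (Fin n) → ℝ :=
    T.indicator (fun p => f p.2) with hG
  have hmemT : ∀ v w, ((v, w) ∈ T) ↔ w ∈ U v := by
    intro v w
    simp [hT, hU, mem_closedBall]
  have hinner : ∀ v, (∫ w in ((S ∩ closedBall (s • v) 1) ∪ (S ∩ closedBall (-(s • v)) 1)),
      f w ∂μ) = ∫ w in S, G (v, w) ∂μ := by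
    intro v
    rw [← inter_union_distrib_left, ← setIntegral_indicator (hUmeas v)]
    apply integral_congr_ae
    apply Filter.EventuallyEq.of_eq
    funext w
    by_cases hw : w ∈ U v
    · rw [indicator_of_mem hw, hG, indicator_of_mem ((hmemT v w).2 hw)]
    · rw [indicator_of_notMem hw, hG, indicator_of_notMem (fun hc => hw ((hmemT v w).1 hc))]
  have hfm : AEStronglyMeasurable f (μ.restrict S) := hf.aestronglyMeasurable hSmeas
  have h2m : AEStronglyMeasurable (fun p : EuclideanSpace ℝ (Fin n) × EuclideanSpace ℝ (Fin n) =>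
      f p.2) ((μ.restrict S).prod (μ.restrict S)) :=
    hfm.comp_quasiMeasurePreserving Measure.quasiMeasurePreserving_snd
  have hGm : AEStronglyMeasurable G ((μ.restrict S).prod (μ.restrict S)) :=
    h2m.indicator hTclosed.measurableSet
  have hae2 : ∀ᵐ p ∂((μ.restrict S).prod (μ.restrict S)), p.2 ∈ S := by
    rw [MeasureTheory.ae_iff]
    have hset : {p : EuclideanSpace ℝ (Fin n) × EuclideanSpace ℝ (Fin n) | ¬ p.2 ∈ S} =
        univ ×ˢ Sᶜ := by ext p; simp
    rw [hset, Measure.prod_prod]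
    have hz : (μ.restrict S) Sᶜ = 0 := by
      rw [Measure.restrict_apply hSmeas.compl]
      simp
    rw [hz, mul_zero]
  have hbound : ∀ᵐ p ∂((μ.restrict S).prod (μ.restrict S)), ‖G p‖ ≤ M := by
    filter_upwards [hae2] with p hp2
    by_cases hpT : p ∈ T
    · rw [hG, indicator_of_mem hpT]
      exact hM p.2 hp2
    · rw [hG, indicator_of_notMem hpT]
      simpa using hM0
  have hGint : Integrable (Function.uncurry fun v w => G (v, w))
      ((μ.restrict S).prod (μ.restrict S)) := by
    have huncurry : (Function.uncurry fun v w => G (v, w)) = G := rfl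
    rw [huncurry]
    exact (integrable_const M).mono' hGm hbound
  set c := (μ (S ∩ U v₀)).toReal with hc
  have hstep : ∀ w ∈ S, (∫ v in S, G (v, w) ∂μ) = c * f w := by
    intro w hw
    have hwn : ‖w‖ = 1 := by rwa [hSdef, mem_sphere_zero_iff_norm] at hw
    set V : Set (EuclideanSpace ℝ (Fin n)) := {v | (v, w) ∈ T} with hV
    have hVmeas : MeasurableSet V := by
      have h1 : IsClosed {v : EuclideanSpace ℝ (Fin n) | dist w (s • v) ≤ 1} :=
        isClosed_le (Continuous.dist continuous_const
          (continuous_id.const_smul s)) continuous_const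
      have h2 : IsClosed {v : EuclideanSpace ℝ (Fin n) | dist w (-(s • v)) ≤ 1} :=
        isClosed_le (Continuous.dist continuous_const
          ((continuous_id.const_smul s).neg)) continuous_const
      exact (h1.union h2).measurableSet
    have hGind : ∀ v, G (v, w) = V.indicator (fun _ => f w) v := by
      intro v
      by_cases hv : (v, w) ∈ T
      · rw [hG, indicator_of_mem hv, indicator_of_mem (show v ∈ V from hv)]
      · rw [hG, indicator_of_notMem hv, indicator_of_notMem (show v ∉ V from hv)]
    have hSV : S ∩ V = S ∩ U w := by
      ext v
      simp only [mem_inter_iff, and_congr_right_iff]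
      intro hvS
      have hvn : ‖v‖ = 1 := by rwa [hSdef, mem_sphere_zero_iff_norm] at hvS
      obtain ⟨hsym1, hsym2⟩ := norm_smul_comm v w hvn hwn s
      have e1 : dist w (s • v) = ‖w - s • v‖ := dist_eq_norm _ _
      have e2 : dist w (-(s • v)) = ‖w + s • v‖ := by rw [dist_eq_norm, sub_neg_eq_add]
      have e3 : dist v (s • w) = ‖v - s • w‖ := dist_eq_norm _ _
      have e4 : dist v (-(s • w)) = ‖v + s • w‖ := by rw [dist_eq_norm, sub_neg_eq_add]
      constructor
      · intro hvV
        rcases hvV with h | h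
        · exact Or.inl (by rw [mem_closedBall, e3, ← hsym1, ← e1]; exact h)
        · exact Or.inr (by rw [mem_closedBall, e4, ← hsym2, ← e2]; exact h)
      · intro hvU
        rcases hvU with h | h
        · exact Or.inl (by rw [mem_closedBall, e3, ← hsym1, ← e1] at h; exact h)
        · exact Or.inr (by rw [mem_closedBall, e4, ← hsym2, ← e2] at h; exact h)
    have hmeq : μ (S ∩ V) = μ (S ∩ U v₀) := by
      rw [hSV]
      exact measure_cap_eq s w v₀ hwn hv₀
    calc (∫ v in S, G (v, w) ∂μ) = ∫ v in S, V.indicator (fun _ => f w) v ∂μ :=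
          integral_congr_ae (Filter.EventuallyEq.of_eq (funext fun v => hGind v))
      _ = ∫ v in S ∩ V, f w ∂μ := setIntegral_indicator hVmeas
      _ = (μ (S ∩ V)).toReal • f w := by rw [setIntegral_const]; rfl
      _ = c * f w := by rw [smul_eq_mul, hmeq, hc]
  calc (∫ v in S, (∫ w in ((S ∩ closedBall (s • v) 1) ∪ (S ∩ closedBall (-(s • v)) 1)),
        f w ∂μ) ∂μ)
      = ∫ v in S, ∫ w in S, G (v, w) ∂μ ∂μ :=
        integral_congr_ae (Filter.EventuallyEq.of_eq (funext fun v => hinner v))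
    _ = ∫ w in S, ∫ v in S, G (v, w) ∂μ ∂μ := integral_integral_swap hGint
    _ = ∫ w in S, c * f w ∂μ := setIntegral_congr_fun hSmeas fun w hw => hstep w hw
    _ = c * ∫ w in S, f w ∂μ := integral_const_mul c f
    _ = (μ ((S ∩ closedBall (s • v₀) 1) ∪ (S ∩ closedBall (-(s • v₀)) 1))).toReal *
        ∫ w in S, f w ∂μ := by rw [hc, ← inter_union_distrib_left, hU]
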